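/- An undirected multigraph G admits an orientation D with λ(D) ≥ 1 (i.e., a strongly connected orientation) if and only if G is 2-edge-connected. -/

import Mathlib

open Finset

variable {V α : Type*} [Fintype V] [DecidableEq V] [Fintype α] [DecidableEq α]

/-- number of arcs of `A` entering `X` (tail outside, head inside). -/
def inDeg (tail head : α → V) (A : Finset α) (X : Finset V) : ℕ :=
  (A.filter fun a => tail a ∉ X ∧ head a ∈ X).card

/-- number of arcs of `A` leaving `X`. -/
def outDeg (tail head : α → V) (A : Finset α) (X : Finset V) : ℕ :=
  (A.filter fun a => tail a ∈ X ∧ head a ∉ X).card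

/-- number of arcs of `A` with tail in `S` and head in `T`. -/
def cnt (tail head : α → V) (A : Finset α) (S T : Finset V) : ℕ :=
  (A.filter fun a => tail a ∈ S ∧ head a ∈ T).card

/-- arc-connectivity: minimum in-degree over nonempty proper vertex sets. -/
noncomputable def lam (tail head : α → V) (A : Finset α) : ℕ :=
  sInf {n | ∃ X : Finset V, X.Nonempty ∧ X ≠ Finset.univ ∧ inDeg tail head A X = n}

/-- tail map after reversing the arcs of `F`. -/
def rTail (tail head : α → V) (F : Finset α) : α → V :=
  fun a => if a ∈ F then head a else tail a

/-- head map after reversing the arcs of `F`. -/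
def rHead (tail head : α → V) (F : Finset α) : α → V :=
  fun a => if a ∈ F then tail a else head a

/-- number of edges of the (underlying) undirected multigraph crossing `X`. -/
def edgeCut (e₁ e₂ : α → V) (E : Finset α) (X : Finset V) : ℕ :=
  (E.filter fun e => (e₁ e ∈ X ∧ e₂ e ∉ X) ∨ (e₁ e ∉ X ∧ e₂ e ∈ X)).card

/-- tail map of the orientation of an undirected multigraph given by `σ`. -/
def oT (e₁ e₂ : α → V) (σ : α → Bool) : α → V := fun a => if σ a then e₁ a else e₂ a

/-- head map of the orientation of an undirected multigraph given by `σ`. -/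
def oH (e₁ e₂ : α → V) (σ : α → Bool) : α → V := fun a => if σ a then e₂ a else e₁ a

/-! ### Auxiliary development for Robbins' theorem -/

open scoped Classical

namespace Robbins

/-- one step along an arc of `A`, staying inside `W`. -/
def Step (t h : α → V) (A : Finset α) (W : Finset V) (u v : V) : Prop :=
  u ∈ W ∧ v ∈ W ∧ ∃ a ∈ A, t a = u ∧ h a = v

/-- reachability inside `W`. -/
def Reach (t h : α → V) (A : Finset α) (W : Finset V) : V → V → Prop :=
  Relation.ReflTransGen (Step t h A W)

def OutClosed (t h : α → V) (A : Finset α) (X : Finset V) : Prop :=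
  ∀ a ∈ A, t a ∈ X → h a ∈ X

def InClosed (t h : α → V) (A : Finset α) (X : Finset V) : Prop :=
  ∀ a ∈ A, h a ∈ X → t a ∈ X

/-- the minimal out-closed set containing `z`. -/
noncomputable def Rset (t h : α → V) (A : Finset α) (z : V) : Finset V :=
  univ.filter fun x => ∀ X : Finset V, z ∈ X → OutClosed t h A X → x ∈ X

/-- the minimal in-closed set containing `S`. -/
noncomputable def Cset (t h : α → V) (A : Finset α) (S : Finset V) : Finset V :=
  univ.filter fun x => ∀ X : Finset V, S ⊆ X → InClosed t h A X → x ∈ X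

variable {t h t' h' : α → V} {A : Finset α} {z x : V} {S X W : Finset V}

lemma mem_Rset :
    x ∈ Rset t h A z ↔ ∀ X : Finset V, z ∈ X → OutClosed t h A X → x ∈ X := by
  simp [Rset]

lemma z_mem_Rset : z ∈ Rset t h A z := mem_Rset.2 fun X hz _ => hz

lemma Rset_outClosed : OutClosed t h A (Rset t h A z) := by
  intro a ha hta
  exact mem_Rset.2 fun X hz hX => hX a ha (mem_Rset.1 hta X hz hX)

lemma Rset_min (hz : z ∈ X) (hX : OutClosed t h A X) : Rset t h A z ⊆ X :=
  fun _ hx => mem_Rset.1 hx X hz hX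

lemma mem_Cset :
    x ∈ Cset t h A S ↔ ∀ X : Finset V, S ⊆ X → InClosed t h A X → x ∈ X := by
  simp [Cset]

lemma subset_Cset : S ⊆ Cset t h A S :=
  fun _ hx => mem_Cset.2 fun _ hS _ => hS hx

lemma Cset_inClosed : InClosed t h A (Cset t h A S) := by
  intro a ha hha
  exact mem_Cset.2 fun X hS hX => hX a ha (mem_Cset.1 hha X hS hX)

lemma Cset_min (hS : S ⊆ X) (hX : InClosed t h A X) : Cset t h A S ⊆ X :=
  fun _ hx => mem_Cset.1 hx X hS hX

lemma reach_mono {A' : Finset α} {W' : Finset V} (hA : A ⊆ A') (hW : W ⊆ W') {u v : V}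
    (hr : Reach t h A W u v) : Reach t h A' W' u v := by
  refine Relation.ReflTransGen.mono ?_ _ _ hr
  rintro p q ⟨hp, hq, a, ha, h1, h2⟩
  exact ⟨hW hp, hW hq, a, hA ha, h1, h2⟩

/-- from outside `X` to inside `X`: some arc enters `X`. -/
lemma reach_enter {u v : V} (hr : Reach t h A W u v) (hv : v ∈ X) :
    u ∈ X ∨ ∃ a ∈ A, t a ∉ X ∧ h a ∈ X := by
  induction hr using Relation.ReflTransGen.head_induction_on with
  | refl => exact Or.inl hv
  | head hstep _ ih =>
    obtain ⟨_, _, a, ha, hta, hha⟩ := hstep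
    rcases ih with hc | hfound
    · by_cases hu : t a ∈ X
      · rw [hta] at hu; exact Or.inl hu
      · exact Or.inr ⟨a, ha, hu, hha ▸ hc⟩
    · exact Or.inr hfound

end Robbins

open Robbins

section Arcs

variable (e₁ e₂ : α → V) (σ : α → Bool)

lemma cross_iff (X : Finset V) (a : α) :
    ((e₁ a ∈ X ∧ e₂ a ∉ X) ∨ (e₁ a ∉ X ∧ e₂ a ∈ X)) ↔
    ((oT e₁ e₂ σ a ∈ X ∧ oH e₁ e₂ σ a ∉ X) ∨ (oT e₁ e₂ σ a ∉ X ∧ oH e₁ e₂ σ a ∈ X)) := by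
  cases hσ : σ a <;> simp [oT, oH, hσ] <;> tauto

lemma edgeCut_eq_out_add_in (E : Finset α) (X : Finset V) :
    edgeCut e₁ e₂ E X =
      outDeg (oT e₁ e₂ σ) (oH e₁ e₂ σ) E X + inDeg (oT e₁ e₂ σ) (oH e₁ e₂ σ) E X := by
  classical
  unfold edgeCut outDeg inDeg
  rw [Finset.filter_congr (fun a _ => cross_iff e₁ e₂ σ X a), Finset.filter_or]
  refine Finset.card_union_of_disjoint ?_
  rw [Finset.disjoint_left]
  intro a ha hb
  rw [mem_filter] at ha hb
  exact hb.2.1 ha.2.1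

lemma inDeg_compl_eq_outDeg (t h : α → V) (A : Finset α) (X : Finset V) :
    inDeg t h A Xᶜ = outDeg t h A X := by
  unfold inDeg outDeg
  refine congrArg _ (Finset.filter_congr fun a _ => ?_)
  simp [Finset.mem_compl]

lemma oT_flip (a : α) : oT e₁ e₂ (Function.update σ a (!σ a)) a = oH e₁ e₂ σ a := by
  cases hσ : σ a <;> simp [oT, oH, hσ]

lemma oH_flip (a : α) : oH e₁ e₂ (Function.update σ a (!σ a)) a = oT e₁ e₂ σ a := by
  cases hσ : σ a <;> simp [oT, oH, hσ]

lemma oT_noflip {a b : α} (hba : b ≠ a) (c : Bool) :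
    oT e₁ e₂ (Function.update σ a c) b = oT e₁ e₂ σ b := by
  simp [oT, Function.update_of_ne hba]

lemma oH_noflip {a b : α} (hba : b ≠ a) (c : Bool) :
    oH e₁ e₂ (Function.update σ a c) b = oH e₁ e₂ σ b := by
  simp [oH, Function.update_of_ne hba]

lemma oT_congr {σ' : α → Bool} {a : α} (hs : σ a = σ' a) : oT e₁ e₂ σ a = oT e₁ e₂ σ' a := by
  simp [oT, hs]

lemma oH_congr {σ' : α → Bool} {a : α} (hs : σ a = σ' a) : oH e₁ e₂ σ a = oH e₁ e₂ σ' a := by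
  simp [oH, hs]

end Arcs

lemma Rset_congr {t h t' h' : α → V} {A : Finset α} (z : V)
    (ht : ∀ a ∈ A, t a = t' a) (hh : ∀ a ∈ A, h a = h' a) :
    Rset t h A z = Rset t' h' A z := by
  have hoc : ∀ X : Finset V, OutClosed t h A X ↔ OutClosed t' h' A X := by
    intro X
    constructor <;> intro hX a ha hta
    · rw [← hh a ha]; exact hX a ha (by rw [ht a ha]; exact hta)
    · rw [hh a ha]; exact hX a ha (by rw [← ht a ha]; exact hta)
  ext x
  rw [mem_Rset, mem_Rset]
  exact ⟨fun H X hz hX => H X hz ((hoc X).2 hX), fun H X hz hX => H X hz ((hoc X).1 hX)⟩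

section Main

variable (e₁ e₂ : α → V) (E : Finset α)

/-- Key flip lemma: we may reorient (keeping `S`-internal edges fixed) so that the minimal
out-closed set (over `E.erase e₀`) containing `z` meets `S`. -/
lemma flip_lemma
    (h2ec : ∀ X : Finset V, X.Nonempty → X ≠ Finset.univ → 2 ≤ edgeCut e₁ e₂ E X)
    (S : Finset V) (hS : S.Nonempty) (σ₀ : α → Bool) (e₀ : α) (z : V) :
    ∃ σ : α → Bool, (∀ a, e₁ a ∈ S → e₂ a ∈ S → σ a = σ₀ a) ∧
      ((Rset (oT e₁ e₂ σ) (oH e₁ e₂ σ) (E.erase e₀) z) ∩ S).Nonempty := by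
  classical
  set E' := E.erase e₀ with hE'
  set cand : Finset (α → Bool) :=
    univ.filter (fun σ => ∀ a, e₁ a ∈ S → e₂ a ∈ S → σ a = σ₀ a) with hcand
  have hσ₀ : σ₀ ∈ cand := by simp [hcand]
  obtain ⟨σ, hσc, hmax⟩ := Finset.exists_max_image cand
    (fun σ => (Rset (oT e₁ e₂ σ) (oH e₁ e₂ σ) E' z).card) ⟨σ₀, hσ₀⟩
  have hσprop : ∀ a, e₁ a ∈ S → e₂ a ∈ S → σ a = σ₀ a := by
    have := hσc; rw [hcand, mem_filter] at this; exact this.2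
  refine ⟨σ, hσprop, ?_⟩
  by_contra hcon
  set R := Rset (oT e₁ e₂ σ) (oH e₁ e₂ σ) E' z with hRdef
  have hdisj : ∀ x ∈ R, x ∉ S := by
    intro x hx hxS
    exact hcon ⟨x, mem_inter.2 ⟨hx, hxS⟩⟩
  have hzR : z ∈ R := z_mem_Rset
  have hRuniv : R ≠ Finset.univ := by
    obtain ⟨s, hs⟩ := hS
    intro hh
    exact hdisj s (hh ▸ mem_univ s) hs
  have h2 := h2ec R ⟨z, hzR⟩ hRuniv
  rw [edgeCut] at h2
  have h2' : 1 < (E.filter fun e => (e₁ e ∈ R ∧ e₂ e ∉ R) ∨ (e₁ e ∉ R ∧ e₂ e ∈ R)).card := by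
    omega
  obtain ⟨a₁, ha₁, a₂, ha₂, hne⟩ := Finset.one_lt_card.1 h2'
  -- pick a crossing edge distinct from e₀
  have key : ∃ a, a ∈ E' ∧ ((e₁ a ∈ R ∧ e₂ a ∉ R) ∨ (e₁ a ∉ R ∧ e₂ a ∈ R)) := by
    rcases eq_or_ne a₁ e₀ with rfl | h1
    · rw [mem_filter] at ha₂
      exact ⟨a₂, mem_erase.2 ⟨fun hc => hne hc.symm, ha₂.1⟩, ha₂.2⟩
    · rw [mem_filter] at ha₁
      exact ⟨a₁, mem_erase.2 ⟨h1, ha₁.1⟩, ha₁.2⟩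
  obtain ⟨a, haE', hacross⟩ := key
  have harc : oT e₁ e₂ σ a ∉ R ∧ oH e₁ e₂ σ a ∈ R := by
    rcases (cross_iff e₁ e₂ σ R a).1 hacross with ⟨h1, h2⟩ | hgood
    · exact absurd (Rset_outClosed a haE' h1) h2
    · exact hgood
  -- flip arc a
  set σ' := Function.update σ a (!σ a) with hσ'def
  have hσ'c : σ' ∈ cand := by
    rw [hcand, mem_filter]
    refine ⟨mem_univ _, fun b hb1 hb2 => ?_⟩
    rcases eq_or_ne b a with rfl | hba
    · exfalso
      have hH : oH e₁ e₂ σ b ∉ S := hdisj _ harc.2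
      cases hσb : σ b <;> simp [oH, hσb] at hH <;> exact hH (by assumption)
    · rw [hσ'def, Function.update_of_ne hba]
      exact hσprop b hb1 hb2
  set R' := Rset (oT e₁ e₂ σ') (oH e₁ e₂ σ') E' z with hR'def
  have hsub : R ⊆ R' := by
    have hmin : R ⊆ R' ∩ R := by
      refine Rset_min (mem_inter.2 ⟨z_mem_Rset, z_mem_Rset⟩) ?_
      intro b hb htb
      rw [mem_inter] at htb
      have hba : b ≠ a := by
        rintro rfl
        exact harc.1 htb.2
      have hT : oT e₁ e₂ σ' b = oT e₁ e₂ σ b := oT_noflip e₁ e₂ σ hba _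
      have hH : oH e₁ e₂ σ' b = oH e₁ e₂ σ b := oH_noflip e₁ e₂ σ hba _
      refine mem_inter.2 ⟨?_, Rset_outClosed b hb htb.2⟩
      have := Rset_outClosed (t := oT e₁ e₂ σ') (h := oH e₁ e₂ σ') (A := E') (z := z)
        b hb (by rw [hT]; exact htb.1)
      rwa [hH] at this
    exact hmin.trans inter_subset_left
  have hnew : oT e₁ e₂ σ a ∈ R' := by
    have h1 : oT e₁ e₂ σ' a ∈ R' := by
      rw [hσ'def, oT_flip]
      exact hsub harc.2
    have := Rset_outClosed (t := oT e₁ e₂ σ') (h := oH e₁ e₂ σ') (A := E') (z := z) a haE' h1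
    rwa [hσ'def, oH_flip] at this
  have hlt : R.card < R'.card :=
    Finset.card_lt_card ⟨hsub, fun hc => harc.1 (hc hnew)⟩
  have := hmax σ' hσ'c
  simp only [← hRdef, ← hR'def] at this
  omega

/-- Ear extension: a strongly-oriented proper subset can be enlarged. -/
lemma ear_lemma
    (h2ec : ∀ X : Finset V, X.Nonempty → X ≠ Finset.univ → 2 ≤ edgeCut e₁ e₂ E X)
    (S : Finset V) (σ : α → Bool) (hSne : S.Nonempty)
    (hSW : ∀ x ∈ S, ∀ y ∈ S, Reach (oT e₁ e₂ σ) (oH e₁ e₂ σ) E S x y)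
    (hSuniv : S ≠ Finset.univ) :
    ∃ (S' : Finset V) (σ' : α → Bool), S ⊆ S' ∧ S.card < S'.card ∧
      ∀ x ∈ S', ∀ y ∈ S', Reach (oT e₁ e₂ σ') (oH e₁ e₂ σ') E S' x y := by
  classical
  have h2 := h2ec S hSne hSuniv
  rw [edgeCut] at h2
  have hfne : (E.filter fun e => (e₁ e ∈ S ∧ e₂ e ∉ S) ∨ (e₁ e ∉ S ∧ e₂ e ∈ S)).Nonempty :=
    card_pos.1 (by omega)
  obtain ⟨e₀, he₀⟩ := hfne
  rw [mem_filter] at he₀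
  obtain ⟨he₀E, hcross⟩ := he₀
  set z : V := if e₁ e₀ ∈ S then e₂ e₀ else e₁ e₀ with hz
  set u : V := if e₁ e₀ ∈ S then e₁ e₀ else e₂ e₀ with hu
  have huz : u ∈ S ∧ z ∉ S := by
    by_cases hc : e₁ e₀ ∈ S
    · rw [hu, hz, if_pos hc, if_pos hc]
      rcases hcross with ⟨h1, h2⟩ | ⟨h1, h2⟩
      · exact ⟨hc, h2⟩
      · exact absurd hc h1
    · rw [hu, hz, if_neg hc, if_neg hc]
      rcases hcross with ⟨h1, h2⟩ | ⟨h1, h2⟩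
      · exact absurd h1 hc
      · exact ⟨h2, hc⟩
  obtain ⟨σ₁, hagree₁, hR₁S⟩ := flip_lemma e₁ e₂ E h2ec S hSne σ e₀ z
  set E' := E.erase e₀ with hE'
  set b : Bool := if e₁ e₀ ∈ S then true else false with hb
  set σ₂ := Function.update σ₁ e₀ b with hσ₂
  have he₀arc : oT e₁ e₂ σ₂ e₀ = u ∧ oH e₁ e₂ σ₂ e₀ = z := by
    by_cases hc : e₁ e₀ ∈ S <;>
      simp [oT, oH, hσ₂, hb, hz, hu, hc]
  have hagree₂ : ∀ a, e₁ a ∈ S → e₂ a ∈ S → σ₂ a = σ a := by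
    intro a h1 h2
    have hae : a ≠ e₀ := by
      rintro rfl
      by_cases hc : e₁ a ∈ S
      · rw [hz] at huz; rw [if_pos hc] at huz; exact huz.2 h2
      · exact hc h1
    rw [hσ₂, Function.update_of_ne hae]
    exact hagree₁ a h1 h2
  -- transfer Rset to σ₂
  have hRtrans : Rset (oT e₁ e₂ σ₂) (oH e₁ e₂ σ₂) E' z
      = Rset (oT e₁ e₂ σ₁) (oH e₁ e₂ σ₁) E' z := by
    refine Rset_congr z (fun a ha => ?_) (fun a ha => ?_)
    · exact oT_noflip e₁ e₂ σ₁ (mem_erase.1 ha).1 b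
    · exact oH_noflip e₁ e₂ σ₁ (mem_erase.1 ha).1 b
  set R := Rset (oT e₁ e₂ σ₂) (oH e₁ e₂ σ₂) E' z with hRdef
  have hRS : (R ∩ S).Nonempty := by rw [hRtrans]; exact hR₁S
  set C := Cset (oT e₁ e₂ σ₂) (oH e₁ e₂ σ₂) E' S with hCdef
  have hSC : S ⊆ C := subset_Cset
  have hCin : InClosed (oT e₁ e₂ σ₂) (oH e₁ e₂ σ₂) E' C := Cset_inClosed
  have hRout : OutClosed (oT e₁ e₂ σ₂) (oH e₁ e₂ σ₂) E' R := Rset_outClosed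
  have hzR : z ∈ R := z_mem_Rset
  -- z ∈ C
  have hzC : z ∈ C := by
    by_contra hzC
    have hD : OutClosed (oT e₁ e₂ σ₂) (oH e₁ e₂ σ₂) E' (R.filter fun x => x ∉ C) := by
      intro a ha hta
      rw [mem_filter] at hta
      refine mem_filter.2 ⟨hRout a ha hta.1, fun hc => hta.2 (hCin a ha hc)⟩
    have hsubD : R ⊆ R.filter fun x => x ∉ C :=
      Rset_min (mem_filter.2 ⟨hzR, hzC⟩) hD
    obtain ⟨s, hs⟩ := hRS
    rw [mem_inter] at hs
    have := hsubD hs.1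
    rw [mem_filter] at this
    exact this.2 (hSC hs.2)
  set M := R ∩ C with hM
  set T := S ∪ M with hT
  have hzM : z ∈ M := mem_inter.2 ⟨hzR, hzC⟩
  have hMT : M ⊆ T := subset_union_right
  have hST : S ⊆ T := subset_union_left
  -- everything in M is reachable from z within M
  have hQ2 : ∀ x ∈ M, Reach (oT e₁ e₂ σ₂) (oH e₁ e₂ σ₂) E' M z x := by
    have hsub : R ⊆ R.filter fun x => x ∈ C → Reach (oT e₁ e₂ σ₂) (oH e₁ e₂ σ₂) E' M z x := by
      refine Rset_min (mem_filter.2 ⟨hzR, fun _ => Relation.ReflTransGen.refl⟩) ?_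
      intro a ha hta
      rw [mem_filter] at hta
      have hhR : oH e₁ e₂ σ₂ a ∈ R := hRout a ha hta.1
      refine mem_filter.2 ⟨hhR, fun hhC => ?_⟩
      have htC : oT e₁ e₂ σ₂ a ∈ C := hCin a ha hhC
      exact (hta.2 htC).tail
        ⟨mem_inter.2 ⟨hta.1, htC⟩, mem_inter.2 ⟨hhR, hhC⟩, a, ha, rfl, rfl⟩
    intro x hx
    rw [hM, mem_inter] at hx
    have := hsub hx.1
    rw [mem_filter] at this
    exact this.2 hx.2
  -- everything in M reaches S within T
  have hQ3 : ∀ x ∈ M, ∃ s ∈ S, Reach (oT e₁ e₂ σ₂) (oH e₁ e₂ σ₂) E T x s := by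
    have hsub : C ⊆ C.filter fun x =>
        x ∈ R → ∃ s ∈ S, Reach (oT e₁ e₂ σ₂) (oH e₁ e₂ σ₂) E T x s := by
      refine Cset_min (fun s hs => mem_filter.2
        ⟨hSC hs, fun _ => ⟨s, hs, Relation.ReflTransGen.refl⟩⟩) ?_
      intro a ha hha
      rw [mem_filter] at hha
      have htC : oT e₁ e₂ σ₂ a ∈ C := hCin a ha hha.1
      refine mem_filter.2 ⟨htC, fun htR => ?_⟩
      have hhR : oH e₁ e₂ σ₂ a ∈ R := hRout a ha htR
      obtain ⟨s, hs, hr⟩ := hha.2 hhR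
      refine ⟨s, hs, Relation.ReflTransGen.head
        ⟨hMT (mem_inter.2 ⟨htR, htC⟩), hMT (mem_inter.2 ⟨hhR, hha.1⟩),
          a, (mem_erase.1 ha).2, rfl, rfl⟩ hr⟩
    intro x hx
    rw [hM, mem_inter] at hx
    have := hsub hx.2
    rw [mem_filter] at this
    exact this.2 hx.1
  -- S is still strongly oriented under σ₂
  have hSW₂ : ∀ x ∈ S, ∀ y ∈ S, Reach (oT e₁ e₂ σ₂) (oH e₁ e₂ σ₂) E S x y := by
    intro x hx y hy
    refine Relation.ReflTransGen.mono ?_ _ _ (hSW x hx y hy)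
    rintro p q ⟨hp, hq, a, haE, hta, hha⟩
    have hin : e₁ a ∈ S ∧ e₂ a ∈ S := by
      cases hσa : σ a
      · simp only [oT, oH, hσa, if_false, Bool.false_eq_true] at hta hha
        exact ⟨hha ▸ hq, hta ▸ hp⟩
      · simp only [oT, oH, hσa, if_true] at hta hha
        exact ⟨hta ▸ hp, hha ▸ hq⟩
    have hs : σ₂ a = σ a := hagree₂ a hin.1 hin.2
    exact ⟨hp, hq, a, haE, by rw [oT_congr e₁ e₂ σ₂ hs]; exact hta,
      by rw [oH_congr e₁ e₂ σ₂ hs]; exact hha⟩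
  -- assemble
  have hstep₀ : Step (oT e₁ e₂ σ₂) (oH e₁ e₂ σ₂) E T u z :=
    ⟨hST huz.1, hMT hzM, e₀, he₀E, he₀arc.1, he₀arc.2⟩
  have hxu : ∀ x ∈ T, Reach (oT e₁ e₂ σ₂) (oH e₁ e₂ σ₂) E T x u := by
    intro x hx
    rcases mem_union.1 hx with hxS | hxM
    · exact reach_mono (Finset.Subset.refl E) hST (hSW₂ x hxS u huz.1)
    · obtain ⟨s, hs, hr⟩ := hQ3 x hxM
      exact hr.trans (reach_mono (Finset.Subset.refl E) hST (hSW₂ s hs u huz.1))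
  have hzy : ∀ y ∈ T, Reach (oT e₁ e₂ σ₂) (oH e₁ e₂ σ₂) E T z y := by
    intro y hy
    rcases mem_union.1 hy with hyS | hyM
    · obtain ⟨s, hs, hr⟩ := hQ3 z hzM
      exact hr.trans (reach_mono (Finset.Subset.refl E) hST (hSW₂ s hs y hyS))
    · exact reach_mono (erase_subset e₀ E) hMT (hQ2 y hyM)
  refine ⟨T, σ₂, hST, ?_, ?_⟩
  · exact Finset.card_lt_card ⟨hST, fun hc => huz.2 (hc (hMT hzM))⟩
  · intro x hx y hy
    exact (hxu x hx).trans ((Relation.ReflTransGen.single hstep₀).trans (hzy y hy))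

lemma grow_lemma
    (h2ec : ∀ X : Finset V, X.Nonempty → X ≠ Finset.univ → 2 ≤ edgeCut e₁ e₂ E X) :
    ∀ (k : ℕ) (S : Finset V) (σ : α → Bool), S.Nonempty →
      (∀ x ∈ S, ∀ y ∈ S, Reach (oT e₁ e₂ σ) (oH e₁ e₂ σ) E S x y) →
      Fintype.card V ≤ S.card + k →
      ∃ σ' : α → Bool,
        ∀ x y : V, Reach (oT e₁ e₂ σ') (oH e₁ e₂ σ') E Finset.univ x y := by
  intro k
  induction k with
  | zero =>
    intro S σ hSne hSW hcard
    have hcard' : S.card = Fintype.card V :=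
      le_antisymm (by simpa using Finset.card_le_card (Finset.subset_univ S)) (by omega)
    have hSuniv : S = Finset.univ := (Finset.card_eq_iff_eq_univ S).1 hcard'
    subst hSuniv
    exact ⟨σ, fun x y => hSW x (mem_univ x) y (mem_univ y)⟩
  | succ k ih =>
    intro S σ hSne hSW hcard
    by_cases hSuniv : S = Finset.univ
    · subst hSuniv
      exact ⟨σ, fun x y => hSW x (mem_univ x) y (mem_univ y)⟩
    · obtain ⟨S', σ', hsub, hlt, hSW'⟩ := ear_lemma e₁ e₂ E h2ec S σ hSne hSW hSuniv
      exact ih S' σ' (hSne.mono hsub) hSW' (by omega)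

end Main

/-- Robbins: a multigraph has a strongly connected orientation iff it is 2-edge-connected. -/
theorem stmt10 (e₁ e₂ : α → V) (E : Finset α) (hV : 2 ≤ Fintype.card V) :
    (∃ σ : α → Bool, 1 ≤ lam (oT e₁ e₂ σ) (oH e₁ e₂ σ) E) ↔
    (∀ X : Finset V, X.Nonempty → X ≠ Finset.univ → 2 ≤ edgeCut e₁ e₂ E X) := by
  classical
  constructor
  · rintro ⟨σ, hσ⟩ X hXne hXu
    have hmemX : inDeg (oT e₁ e₂ σ) (oH e₁ e₂ σ) E X ∈
        {n | ∃ Y : Finset V, Y.Nonempty ∧ Y ≠ Finset.univ ∧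
          inDeg (oT e₁ e₂ σ) (oH e₁ e₂ σ) E Y = n} := ⟨X, hXne, hXu, rfl⟩
    have h1 : 1 ≤ inDeg (oT e₁ e₂ σ) (oH e₁ e₂ σ) E X := le_trans hσ (Nat.sInf_le hmemX)
    have hXcne : (Xᶜ : Finset V).Nonempty := by
      rw [← Finset.card_pos]
      have hXlt : X.card < Fintype.card V := by
        rcases lt_or_eq_of_le (by simpa using Finset.card_le_card (Finset.subset_univ X)) with hh | hh
        · simpa using hh
        · exact absurd ((Finset.card_eq_iff_eq_univ X).1 (by simpa using hh)) hXu
      have := Finset.card_compl X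
      omega
    have hXcu : (Xᶜ : Finset V) ≠ Finset.univ := by
      intro hc
      obtain ⟨x, hx⟩ := hXne
      have : x ∈ (Xᶜ : Finset V) := hc ▸ mem_univ x
      exact (Finset.mem_compl.1 this) hx
    have hmemXc : inDeg (oT e₁ e₂ σ) (oH e₁ e₂ σ) E Xᶜ ∈
        {n | ∃ Y : Finset V, Y.Nonempty ∧ Y ≠ Finset.univ ∧
          inDeg (oT e₁ e₂ σ) (oH e₁ e₂ σ) E Y = n} := ⟨Xᶜ, hXcne, hXcu, rfl⟩
    have h2 : 1 ≤ inDeg (oT e₁ e₂ σ) (oH e₁ e₂ σ) E Xᶜ := le_trans hσ (Nat.sInf_le hmemXc)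
    rw [edgeCut_eq_out_add_in e₁ e₂ σ E X, ← inDeg_compl_eq_outDeg]
    omega
  · intro h2ec
    obtain ⟨v₀, _, _⟩ := Fintype.exists_pair_of_one_lt_card (by omega : 1 < Fintype.card V)
    have hbase : ∀ x ∈ ({v₀} : Finset V), ∀ y ∈ ({v₀} : Finset V),
        Reach (oT e₁ e₂ (fun _ => true)) (oH e₁ e₂ (fun _ => true)) E ({v₀} : Finset V) x y := by
      intro x hx y hy
      rw [Finset.mem_singleton] at hx hy
      subst hx; subst hy
      exact Relation.ReflTransGen.refl
    obtain ⟨σ', hσ'⟩ := grow_lemma e₁ e₂ E h2ec (Fintype.card V) {v₀} (fun _ => true)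
      (Finset.singleton_nonempty v₀) hbase (by simp)
    refine ⟨σ', ?_⟩
    have hne : {n | ∃ X : Finset V, X.Nonempty ∧ X ≠ Finset.univ ∧
        inDeg (oT e₁ e₂ σ') (oH e₁ e₂ σ') E X = n}.Nonempty := by
      refine ⟨inDeg (oT e₁ e₂ σ') (oH e₁ e₂ σ') E {v₀}, {v₀}, Finset.singleton_nonempty v₀, ?_, rfl⟩
      intro hc
      obtain ⟨a, b, hab⟩ := Fintype.exists_pair_of_one_lt_card (by omega : 1 < Fintype.card V)
      have ha : a ∈ ({v₀} : Finset V) := hc ▸ mem_univ a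
      have hb : b ∈ ({v₀} : Finset V) := hc ▸ mem_univ b
      rw [Finset.mem_singleton] at ha hb
      exact hab (ha.trans hb.symm)
    refine le_csInf hne ?_
    rintro n ⟨X, hXne, hXu, rfl⟩
    obtain ⟨x, hx⟩ := hXne
    have hyex : ∃ y, y ∉ X := by
      by_contra hc
      push_neg at hc
      exact hXu (Finset.eq_univ_iff_forall.2 hc)
    obtain ⟨y, hy⟩ := hyex
    have hreach : Reach (oT e₁ e₂ σ') (oH e₁ e₂ σ') E Finset.univ y x := hσ' y x
    rcases reach_enter hreach hx with hyX | ⟨a, ha, h1, h2⟩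
    · exact absurd hyX hy
    · unfold inDeg
      exact Finset.card_pos.2 ⟨a, Finset.mem_filter.2 ⟨ha, h1, h2⟩⟩
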